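/- Suppose ρ_{ABC} is a density matrix on a tripartite finite-dimensional system and suppose the operator 𝓘_A := Tr_{BC}(ρ_{ABC} Ĥ_{A:C|B}) is positive semidefinite, where Ĥ_{A:C|B} = Ĥ_{AB} + Ĥ_{BC} − Ĥ_B − Ĥ_{ABC} and Ĥ_X = −(log ρ_X) ⊗ I_{X^c}. Then for any operator O_A supported on A, |Tr(ρ_{ABC} Ĥ_{A:C|B} (O_A ⊗ I_{BC}))| ≤ ‖O_A‖_∞ · I(A:C|B), where I(A:C|B) = S_{AB} + S_{BC} − S_B − S_{ABC} is the conditional mutual information with S_X = −Tr(ρ_X log ρ_X). -/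

import Mathlib

open scoped Matrix.Norms.L2Operator ComplexOrder
open Matrix

/-- Logarithm of a matrix, defined via the spectral decomposition when the matrix is
Hermitian (and junk value `0` otherwise). -/
noncomputable def matLog {n : Type*} [Fintype n] [DecidableEq n]
    (M : Matrix n n ℂ) : Matrix n n ℂ :=
  if h : M.IsHermitian then
    (h.eigenvectorUnitary : Matrix n n ℂ) *
      Matrix.diagonal (fun i => (Real.log (h.eigenvalues i) : ℂ)) *
      star (h.eigenvectorUnitary : Matrix n n ℂ)
  else 0

section Tripartite

variable {A B C : Type*} [Fintype A] [Fintype B] [Fintype C]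
  [DecidableEq A] [DecidableEq B] [DecidableEq C]

/-- Reduced density matrix on `A ⊗ B` (partial trace over `C`). -/
noncomputable def rhoAB (ρ : Matrix (A × B × C) (A × B × C) ℂ) : Matrix (A × B) (A × B) ℂ :=
  fun i j => ∑ c, ρ (i.1, i.2, c) (j.1, j.2, c)

/-- Reduced density matrix on `B ⊗ C` (partial trace over `A`). -/
noncomputable def rhoBC (ρ : Matrix (A × B × C) (A × B × C) ℂ) : Matrix (B × C) (B × C) ℂ :=
  fun i j => ∑ a, ρ (a, i.1, i.2) (a, j.1, j.2)

/-- Reduced density matrix on `B`. -/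
noncomputable def rhoB (ρ : Matrix (A × B × C) (A × B × C) ℂ) : Matrix B B ℂ :=
  fun b b' => ∑ a, ∑ c, ρ (a, b, c) (a, b', c)

/-- Partial trace over `B ⊗ C`, giving an operator on `A`. -/
noncomputable def ptraceBC (M : Matrix (A × B × C) (A × B × C) ℂ) : Matrix A A ℂ :=
  fun a a' => ∑ b, ∑ c, M (a, b, c) (a', b, c)

/-- Embed an operator on `A ⊗ B` into `A ⊗ B ⊗ C` by tensoring with the identity. -/
def embedAB (M : Matrix (A × B) (A × B) ℂ) : Matrix (A × B × C) (A × B × C) ℂ :=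
  fun i j => if i.2.2 = j.2.2 then M (i.1, i.2.1) (j.1, j.2.1) else 0

/-- Embed an operator on `B ⊗ C` into `A ⊗ B ⊗ C` by tensoring with the identity. -/
def embedBC (M : Matrix (B × C) (B × C) ℂ) : Matrix (A × B × C) (A × B × C) ℂ :=
  fun i j => if i.1 = j.1 then M i.2 j.2 else 0

/-- Embed an operator on `B` into `A ⊗ B ⊗ C` by tensoring with the identity. -/
def embedB (M : Matrix B B ℂ) : Matrix (A × B × C) (A × B × C) ℂ :=
  fun i j => if i.1 = j.1 ∧ i.2.2 = j.2.2 then M i.2.1 j.2.1 else 0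

/-- Embed an operator on `A` into `A ⊗ B ⊗ C` by tensoring with the identity. -/
def embedA (M : Matrix A A ℂ) : Matrix (A × B × C) (A × B × C) ℂ :=
  fun i j => if i.2 = j.2 then M i.1 j.1 else 0

/-- The entanglement spectrum `Ĥ_{AB} = −(log ρ_{AB}) ⊗ I_C`, as an operator on the
full system. -/
noncomputable def HhatAB (ρ : Matrix (A × B × C) (A × B × C) ℂ) :
    Matrix (A × B × C) (A × B × C) ℂ := embedAB (-(matLog (rhoAB ρ)))

/-- `Ĥ_{BC} = −(log ρ_{BC}) ⊗ I_A`. -/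
noncomputable def HhatBC (ρ : Matrix (A × B × C) (A × B × C) ℂ) :
    Matrix (A × B × C) (A × B × C) ℂ := embedBC (-(matLog (rhoBC ρ)))

/-- `Ĥ_B = −(log ρ_B) ⊗ I_{AC}`. -/
noncomputable def HhatB (ρ : Matrix (A × B × C) (A × B × C) ℂ) :
    Matrix (A × B × C) (A × B × C) ℂ := embedB (-(matLog (rhoB ρ)))

/-- `Ĥ_{ABC} = −log ρ_{ABC}`. -/
noncomputable def HhatABC (ρ : Matrix (A × B × C) (A × B × C) ℂ) :
    Matrix (A × B × C) (A × B × C) ℂ := -(matLog ρ)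

/-- The conditional mutual spectrum `Ĥ_{A:C|B} = Ĥ_{AB} + Ĥ_{BC} − Ĥ_B − Ĥ_{ABC}`. -/
noncomputable def HhatACB (ρ : Matrix (A × B × C) (A × B × C) ℂ) :
    Matrix (A × B × C) (A × B × C) ℂ :=
  HhatAB ρ + HhatBC ρ - HhatB ρ - HhatABC ρ

/-- Von Neumann entropy of a state `σ`: `S = −Tr(σ log σ)`. -/
noncomputable def vnEntropy {n : Type*} [Fintype n] [DecidableEq n]
    (σ : Matrix n n ℂ) : ℝ := -(Matrix.trace (σ * matLog σ)).re

/-- Conditional mutual information `I(A:C|B) = S_{AB} + S_{BC} − S_B − S_{ABC}`. -/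
noncomputable def condMutualInfo (ρ : Matrix (A × B × C) (A × B × C) ℂ) : ℝ :=
  vnEntropy (rhoAB ρ) + vnEntropy (rhoBC ρ) - vnEntropy (rhoB ρ) - vnEntropy ρ

end Tripartite

/-! ### Auxiliary lemmas -/

section Aux

lemma sum_rotate' {α β γ M : Type*} [Fintype α] [Fintype β] [Fintype γ]
    [AddCommMonoid M] (f : α → β → γ → M) :
    ∑ a, ∑ b, ∑ c, f a b c = ∑ c, ∑ a, ∑ b, f a b c := by
  have h1 : ∀ a, ∑ b, ∑ c, f a b c = ∑ c, ∑ b, f a b c := fun a => Finset.sum_comm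
  simp_rw [h1]
  exact Finset.sum_comm

lemma sum_comm3 {α β γ M : Type*} [Fintype α] [Fintype β] [Fintype γ]
    [AddCommMonoid M] (f : α → β → γ → M) :
    ∑ a, ∑ b, ∑ c, f a b c = ∑ b, ∑ c, ∑ a, f a b c :=
  (sum_rotate' fun b c a => f a b c).symm

lemma sum_comm4 {α β γ δ M : Type*} [Fintype α] [Fintype β] [Fintype γ] [Fintype δ]
    [AddCommMonoid M] (f : α → β → γ → δ → M) :
    ∑ a, ∑ b, ∑ c, ∑ d, f a b c d = ∑ b, ∑ c, ∑ d, ∑ a, f a b c d := by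
  rw [Finset.sum_comm]
  exact Finset.sum_congr rfl fun b _ => sum_comm3 fun a c d => f a b c d

lemma sum_comm5 {α β γ δ ε M : Type*} [Fintype α] [Fintype β] [Fintype γ] [Fintype δ]
    [Fintype ε] [AddCommMonoid M] (f : α → β → γ → δ → ε → M) :
    ∑ a, ∑ b, ∑ c, ∑ d, ∑ e, f a b c d e = ∑ b, ∑ c, ∑ d, ∑ e, ∑ a, f a b c d e := by
  rw [Finset.sum_comm]
  exact Finset.sum_congr rfl fun b _ => sum_comm4 fun a c d e => f a b c d e

/-- PSD trace bound: `|Tr(N • O)| ≤ ‖O‖ Tr(N)`. -/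
lemma abs_trace_mul_le_of_posSemidef {n : Type*} [Fintype n] [DecidableEq n]
    {N : Matrix n n ℂ} (hN : N.PosSemidef) (O : Matrix n n ℂ) :
    ‖Matrix.trace (N * O)‖ ≤ ‖O‖ * (Matrix.trace N).re := by
  have hH := hN.1
  set U : Matrix n n ℂ := (hH.eigenvectorUnitary : Matrix n n ℂ) with hUdef
  have hUU : star U * U = 1 := Matrix.mem_unitaryGroup_iff'.mp hH.eigenvectorUnitary.2
  have hspec : N = U * diagonal (RCLike.ofReal ∘ hH.eigenvalues) * star U := hH.spectral_theorem
  have h1 : Matrix.trace (N * O) =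
      ∑ i, (hH.eigenvalues i : ℂ) * (star U * O * U) i i := by
    calc Matrix.trace (N * O)
        = Matrix.trace (U * diagonal (RCLike.ofReal ∘ hH.eigenvalues) * star U * O) := by
          rw [← hspec]
      _ = Matrix.trace (diagonal (RCLike.ofReal ∘ hH.eigenvalues) * (star U * O * U)) := by
          rw [mul_assoc (U * diagonal (RCLike.ofReal ∘ hH.eigenvalues)),
            Matrix.trace_mul_comm, ← mul_assoc, Matrix.trace_mul_comm]
      _ = ∑ i, (hH.eigenvalues i : ℂ) * (star U * O * U) i i := by
          simp [Matrix.trace, Matrix.diagonal_mul, Matrix.diag]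
  have hdiag : ∀ i, ‖(star U * O * U) i i‖ ≤ ‖O‖ := by
    intro i
    set v : EuclideanSpace ℂ n := WithLp.toLp 2 (fun k => U k i) with hv
    have hvnorm : ‖v‖ = 1 := by
      have h2 : (inner ℂ v v : ℂ) = 1 := by
        have h0 : (star U * U) i i = 1 := by rw [hUU]; simp
        simpa [Matrix.mul_apply, Matrix.star_apply, inner, hv, mul_comm] using h0
      have h4 := @inner_self_eq_norm_sq ℂ _ _ _ _ v
      have h3 : (‖v‖ : ℝ)^2 = 1 := by
        rw [← h4]
        simpa using congrArg Complex.re h2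
      nlinarith [norm_nonneg v]
    have heq : (star U * O * U) i i = (inner ℂ v ((EuclideanSpace.equiv n ℂ).symm (O *ᵥ v)) : ℂ) := by
      simp only [Matrix.mul_apply, Matrix.star_apply, Matrix.mulVec, dotProduct]
      rw [show (inner ℂ v ((EuclideanSpace.equiv n ℂ).symm (O *ᵥ v)) : ℂ)
          = ∑ k, star (U k i) * ∑ j, O k j * U j i from by
            simp [hv, PiLp.inner_apply, Matrix.mulVec, dotProduct, mul_comm]]
      simp only [Finset.sum_mul, Finset.mul_sum]
      rw [Finset.sum_comm]
      exact Finset.sum_congr rfl fun k _ => Finset.sum_congr rfl fun j _ => by ring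
    rw [heq]
    calc ‖(inner ℂ v ((EuclideanSpace.equiv n ℂ).symm (O *ᵥ v)) : ℂ)‖
        ≤ ‖v‖ * ‖(EuclideanSpace.equiv n ℂ).symm (O *ᵥ v)‖ := norm_inner_le_norm _ _
      _ ≤ ‖v‖ * (‖O‖ * ‖v‖) :=
          mul_le_mul_of_nonneg_left (Matrix.l2_opNorm_mulVec O v) (norm_nonneg v)
      _ = ‖O‖ := by rw [hvnorm]; ring
  have htrc : Matrix.trace N = ∑ i, (hH.eigenvalues i : ℂ) := by
    conv_lhs => rw [hspec]
    rw [Matrix.trace_mul_cycle, hUU, one_mul]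
    simp [Matrix.trace, Matrix.diag]
  have htr : (Matrix.trace N).re = ∑ i, hH.eigenvalues i := by
    have := congrArg Complex.re htrc
    simpa using this
  rw [h1, htr]
  calc ‖∑ i, (hH.eigenvalues i : ℂ) * (star U * O * U) i i‖
      ≤ ∑ i, ‖(hH.eigenvalues i : ℂ) * (star U * O * U) i i‖ := norm_sum_le _ _
    _ ≤ ∑ i, hH.eigenvalues i * ‖O‖ := by
        apply Finset.sum_le_sum
        intro i _
        rw [norm_mul, Complex.norm_real, Real.norm_eq_abs,
          abs_of_nonneg (hN.eigenvalues_nonneg i)]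
        exact mul_le_mul_of_nonneg_left (hdiag i) (hN.eigenvalues_nonneg i)
    _ = ‖O‖ * ∑ i, hH.eigenvalues i := by rw [← Finset.sum_mul]; ring

variable {A B C : Type*} [Fintype A] [Fintype B] [Fintype C]
  [DecidableEq A] [DecidableEq B] [DecidableEq C]

lemma trace_mul_embedA (M : Matrix (A × B × C) (A × B × C) ℂ) (O : Matrix A A ℂ) :
    Matrix.trace (M * embedA O) = Matrix.trace (ptraceBC M * O) := by
  simp only [Matrix.trace, Matrix.diag, Matrix.mul_apply, embedA, ptraceBC,
    Fintype.sum_prod_type, mul_ite, mul_zero, Finset.sum_ite_eq, Finset.sum_ite_eq',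
    Finset.mem_univ, if_true, Finset.sum_mul, Finset.mul_sum]
  exact Finset.sum_congr rfl fun a _ => sum_rotate' _

lemma trace_mul_embedAB (M : Matrix (A × B × C) (A × B × C) ℂ) (N : Matrix (A × B) (A × B) ℂ) :
    Matrix.trace (M * embedAB N) = Matrix.trace (rhoAB M * N) := by
  simp only [Matrix.trace, Matrix.diag, Matrix.mul_apply, embedAB, rhoAB,
    Fintype.sum_prod_type, mul_ite, mul_zero, Finset.sum_ite_eq, Finset.sum_ite_eq',
    Finset.mem_univ, if_true, Finset.sum_mul, Finset.mul_sum]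
  exact Finset.sum_congr rfl fun a _ => Finset.sum_congr rfl fun b _ => sum_comm3 _

lemma trace_mul_embedBC (M : Matrix (A × B × C) (A × B × C) ℂ) (N : Matrix (B × C) (B × C) ℂ) :
    Matrix.trace (M * embedBC N) = Matrix.trace (rhoBC M * N) := by
  simp only [Matrix.trace, Matrix.diag, Matrix.mul_apply, embedBC, rhoBC,
    Fintype.sum_prod_type, mul_ite, mul_zero, Finset.sum_ite_eq, Finset.sum_ite_eq',
    Finset.mem_univ, if_true, Finset.sum_mul, Finset.mul_sum]
  have step : ∀ (x : A) (x1 : B) (y : C),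
      (∑ x2 : A, ∑ x3 : B, ∑ x4 : C,
        if x2 = x then M (x, x1, y) (x2, x3, x4) * N (x3, x4) (x1, y) else 0)
      = ∑ x3 : B, ∑ x4 : C, M (x, x1, y) (x, x3, x4) * N (x3, x4) (x1, y) := by
    intro x x1 y
    rw [sum_comm3]
    simp [Finset.sum_ite_eq']
  simp_rw [step]
  exact sum_comm5 _

lemma trace_mul_embedB (M : Matrix (A × B × C) (A × B × C) ℂ) (N : Matrix B B ℂ) :
    Matrix.trace (M * embedB N) = Matrix.trace (rhoB M * N) := by
  simp only [Matrix.trace, Matrix.diag, Matrix.mul_apply, embedB, rhoB, ite_and,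
    Fintype.sum_prod_type, mul_ite, mul_zero, Finset.sum_ite_eq, Finset.sum_ite_eq',
    Finset.mem_univ, if_true, Finset.sum_mul, Finset.mul_sum]
  have step : ∀ (x : A) (x1 : B) (x2 : C),
      (∑ x3 : A, ∑ x4 : B, ∑ x5 : C,
        if x3 = x then if x5 = x2 then M (x, x1, x2) (x3, x4, x5) * N x4 x1 else 0 else 0)
      = ∑ x4 : B, M (x, x1, x2) (x, x4, x2) * N x4 x1 := by
    intro x x1 x2
    rw [sum_comm3]
    simp [Finset.sum_ite_eq']
  simp_rw [step]
  rw [sum_comm4]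
  exact Finset.sum_congr rfl fun b _ => sum_comm3 _

lemma embedAB_neg (M : Matrix (A × B) (A × B) ℂ) :
    embedAB (C := C) (-M) = -(embedAB M) := by
  ext i j
  by_cases h : i.2.2 = j.2.2 <;> simp [embedAB, h]

lemma embedBC_neg (M : Matrix (B × C) (B × C) ℂ) :
    embedBC (A := A) (-M) = -(embedBC M) := by
  ext i j
  by_cases h : i.1 = j.1 <;> simp [embedBC, h]

lemma embedB_neg (M : Matrix B B ℂ) :
    embedB (A := A) (C := C) (-M) = -(embedB M) := by
  ext i j
  by_cases h : i.1 = j.1 ∧ i.2.2 = j.2.2 <;> simp [embedB, h]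

lemma trace_ptraceBC (M : Matrix (A × B × C) (A × B × C) ℂ) :
    Matrix.trace (ptraceBC M) = Matrix.trace M := by
  simp [Matrix.trace, Matrix.diag, ptraceBC, Fintype.sum_prod_type]

end Aux


/-- Lemma 1 of the paper: if `𝓘_A = Tr_BC(ρ Ĥ_{A:C|B})` is positive semidefinite, then the
correlation of the conditional mutual spectrum with any operator supported on `A` is bounded
by the conditional mutual information. -/
theorem abs_trace_condMutualSpectrum_le {A B C : Type*}
    [Fintype A] [Fintype B] [Fintype C] [DecidableEq A] [DecidableEq B] [DecidableEq C]
    (ρ : Matrix (A × B × C) (A × B × C) ℂ)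
    (hρ : ρ.PosDef) (htr : Matrix.trace ρ = 1)
    (hAB : (rhoAB ρ).PosDef) (hBC : (rhoBC ρ).PosDef) (hB : (rhoB ρ).PosDef)
    (hpos : (ptraceBC (ρ * HhatACB ρ)).PosSemidef) (O : Matrix A A ℂ) :
    ‖Matrix.trace (ρ * HhatACB ρ * embedA O)‖ ≤ ‖O‖ * condMutualInfo ρ := by
  have hkey := abs_trace_mul_le_of_posSemidef hpos O
  rw [← trace_mul_embedA] at hkey
  refine hkey.trans ?_
  apply mul_le_mul_of_nonneg_left _ (norm_nonneg O)
  rw [trace_ptraceBC]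
  have hexp : Matrix.trace (ρ * HhatACB ρ) =
      -Matrix.trace (rhoAB ρ * matLog (rhoAB ρ)) - Matrix.trace (rhoBC ρ * matLog (rhoBC ρ))
        + Matrix.trace (rhoB ρ * matLog (rhoB ρ)) + Matrix.trace (ρ * matLog ρ) := by
    simp only [HhatACB, HhatAB, HhatBC, HhatB, HhatABC, mul_sub, mul_add, Matrix.trace_sub,
      Matrix.trace_add]
    rw [embedAB_neg, embedBC_neg, embedB_neg]
    simp only [mul_neg, Matrix.trace_neg, trace_mul_embedA, trace_mul_embedAB,
      trace_mul_embedBC, trace_mul_embedB]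
    ring
  rw [hexp]
  simp only [condMutualInfo, vnEntropy, Complex.add_re, Complex.sub_re, Complex.neg_re]
  apply le_of_eq
  ring
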